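/- A q-basic graph with an (ℓ_1, ℓ_2, ℓ_{31}, ℓ_{32}) configuration has exactly ℓ_1 + (3/2)ℓ_2 + 3ℓ_{31} + 2ℓ_{32} edges. -/

import Mathlib

noncomputable section

open scoped Classical in
/-- The set of vertices of `G` contained in at least one triangle. -/
def triVerts {V : Type*} [Fintype V] (G : SimpleGraph V) : Finset V :=
  Finset.univ.filter fun v => ∃ u w, G.Adj v u ∧ G.Adj v w ∧ G.Adj u w

/-- `V_T(G)`: the number of vertices of `G` contained in at least one triangle. -/
def VTg {V : Type*} [Fintype V] (G : SimpleGraph V) : ℕ := (triVerts G).card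

/-- A graph `G` is `q`-basic if `V_T(G) = q` and removing any edge strictly decreases `V_T`. -/
def QBasic {V : Type*} [Fintype V] (G : SimpleGraph V) (q : ℕ) : Prop :=
  VTg G = q ∧ ∀ e ∈ G.edgeSet, VTg (G.deleteEdges {e}) < q

/-- The decomposition of (the triangle-vertices of) a `q`-basic graph described in
Lemma 2.5 of the paper: `V₁` carries a `K₃`-factor, `V₂` a matching whose matched pairs
have a common neighbour in `V₁`, and `V₃₁`, `V₃₂` consist of the remaining vertices,
which are common neighbours of endpoints of edges of `W`, resp. of edges of `G[V₁]`
or edges between `V₁` and `V₂`. -/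
def GoodDecomp {V : Type*} [Fintype V] [DecidableEq V] (G : SimpleGraph V)
    (V1 V2 V31 V32 : Finset V) : Prop :=
  -- (V1, V2, V31, V32) is a partition of the set of vertices lying in triangles
  (V1 ∪ V2 ∪ V31 ∪ V32 = triVerts G) ∧
  Disjoint V1 V2 ∧ Disjoint V1 V31 ∧ Disjoint V1 V32 ∧
  Disjoint V2 V31 ∧ Disjoint V2 V32 ∧ Disjoint V31 V32 ∧
  ∃ (T : Finset (Finset V)) (M : Finset (Finset V)) (c : Finset V → V),
    -- (1) T is a K₃-factor of G[V₁] ...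
    (∀ t ∈ T, t.card = 3 ∧ t ⊆ V1 ∧ ∀ u ∈ t, ∀ v ∈ t, u ≠ v → G.Adj u v) ∧
    (T : Set (Finset V)).PairwiseDisjoint id ∧ T.biUnion id = V1 ∧
    -- ... and there is no triangle outside V₁
    (¬ ∃ u v w : V, u ∉ V1 ∧ v ∉ V1 ∧ w ∉ V1 ∧ G.Adj u v ∧ G.Adj v w ∧ G.Adj u w) ∧
    -- (2) M is a perfect matching of G[V₂] ...
    (∀ m ∈ M, m.card = 2 ∧ m ⊆ V2 ∧ ∀ u ∈ m, ∀ v ∈ m, u ≠ v → G.Adj u v) ∧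
    (M : Set (Finset V)).PairwiseDisjoint id ∧ M.biUnion id = V2 ∧
    -- ... whose matched pairs have the common neighbour `c m ∈ V₁`
    (∀ m ∈ M, c m ∈ V1 ∧ ∀ u ∈ m, G.Adj u (c m)) ∧
    -- ... G[V₂] has no edges besides the matching edges
    (∀ u ∈ V2, ∀ v ∈ V2, G.Adj u v → ∃ m ∈ M, u ∈ m ∧ v ∈ m) ∧
    -- ... and the rest is an independent set
    (∀ u ∈ triVerts G, ∀ v ∈ triVerts G,
        u ∉ V1 → u ∉ V2 → v ∉ V1 → v ∉ V2 → ¬ G.Adj u v) ∧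
    -- W: edges inside V₁ not used by the K₃-factor, together with edges between V₁ and V₂
    -- other than those joining matched pairs of V₂ to their chosen common neighbour in V₁
    ∃ W : V → V → Prop,
      (W = fun x y =>
        (x ∈ V1 ∧ y ∈ V1 ∧ G.Adj x y ∧ ¬ ∃ t ∈ T, x ∈ t ∧ y ∈ t) ∨
        (x ∈ V1 ∧ y ∈ V2 ∧ G.Adj x y ∧ ¬ ∃ m ∈ M, y ∈ m ∧ c m = x)) ∧
      -- (31) every vertex of V₃₁ is a common neighbour of the endpoints of some edge of W,
      (∀ z ∈ V31, ∃ x y, W x y ∧ G.Adj x z ∧ G.Adj y z) ∧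
      -- and the endpoints of each edge of W have exactly one common neighbour in V₃₁
      (∀ x y, W x y → ∃! z, z ∈ V31 ∧ G.Adj x z ∧ G.Adj y z) ∧
      -- (32) every vertex of V₃₂ is a common neighbour of the endpoints of an edge of G[V₁]
      -- or of an edge between V₁ and V₂
      (∀ z ∈ V32, ∃ x y, G.Adj x y ∧ G.Adj x z ∧ G.Adj y z ∧
        ((x ∈ V1 ∧ y ∈ V1) ∨ (x ∈ V1 ∧ y ∈ V2)))

/-- `G` is `q`-basic and admits an `(ℓ₁, ℓ₂, ℓ₃₁, ℓ₃₂)` configuration. -/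
def HasConfig {V : Type*} [Fintype V] [DecidableEq V] (G : SimpleGraph V)
    (q l1 l2 l31 l32 : ℕ) : Prop :=
  QBasic G q ∧ ∃ V1 V2 V31 V32 : Finset V, GoodDecomp G V1 V2 V31 V32 ∧
    V1.card = l1 ∧ V2.card = l2 ∧ V31.card = l31 ∧ V32.card = l32

/-- a `q`-basic graph admitting an `(ℓ₁, ℓ₂, ℓ₃₁, ℓ₃₂)` configuration has
exactly `ℓ₁ + (3/2)ℓ₂ + 3ℓ₃₁ + 2ℓ₃₂` edges. -/
theorem stmt6 {V : Type*} [Fintype V] [DecidableEq V] (G : SimpleGraph V)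
    (q l1 l2 l31 l32 : ℕ) (hG : HasConfig G q l1 l2 l31 l32) :
    (G.edgeSet.ncard : ℝ) = l1 + (3 / 2) * l2 + 3 * l31 + 2 * l32 := by
  classical
  obtain ⟨⟨hq, hmin⟩, V1, V2, V31, V32, hdec, h1, h2, h31, h32⟩ := hG
  obtain ⟨hcover, d12, d131, d132, d231, d232, d3132, T, M, c,
    hT, hTdisj, hTun, hnotri, hM, hMdisj, hMun, hMc, hMonly, hindep,
    W, hW, hW31, hWuniq, hV32⟩ := hdec
  have memTri : ∀ v : V, v ∈ triVerts G ↔ ∃ u w, G.Adj v u ∧ G.Adj v w ∧ G.Adj u w := by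
    intro v; simp [triVerts]
  -- if every triangle-vertex survives the deletion of edge (a,b), contradiction with q-basic
  have keyDel : ∀ a b : V, G.Adj a b →
      (∀ v ∈ triVerts G, ∃ p r, G.Adj v p ∧ G.Adj v r ∧ G.Adj p r ∧
        s(v,p) ≠ s(a,b) ∧ s(v,r) ≠ s(a,b) ∧ s(p,r) ≠ s(a,b)) → False := by
    intro a b hab hall
    have hlt := hmin s(a,b) (by simpa using hab)
    have heq : triVerts (G.deleteEdges {s(a,b)}) = triVerts G := by
      apply Finset.Subset.antisymm
      · intro v hv
        simp only [triVerts, Finset.mem_filter, Finset.mem_univ, true_and,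
          SimpleGraph.deleteEdges_adj] at hv ⊢
        obtain ⟨u, w, hu, hw, huw⟩ := hv
        exact ⟨u, w, hu.1, hw.1, huw.1⟩
      · intro v hv
        obtain ⟨p, r, a1, a2, a3, n1, n2, n3⟩ := hall v hv
        simp only [triVerts, Finset.mem_filter, Finset.mem_univ, true_and,
          SimpleGraph.deleteEdges_adj, Set.mem_singleton_iff]
        exact ⟨p, r, ⟨a1, n1⟩, ⟨a2, n2⟩, ⟨a3, n3⟩⟩
    rw [VTg, heq, ← VTg] at hlt
    omega
  -- every edge lies in a triangle
  have commonNbr : ∀ a b : V, G.Adj a b → ∃ w, G.Adj a w ∧ G.Adj b w := by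
    intro a b hab
    by_contra h
    push_neg at h
    apply keyDel a b hab
    intro v hv
    rw [memTri] at hv
    obtain ⟨p, r, a1, a2, a3⟩ := hv
    refine ⟨p, r, a1, a2, a3, ?_, ?_, ?_⟩ <;>
    · intro he
      rw [Sym2.eq_iff] at he
      rcases he with ⟨rfl, rfl⟩ | ⟨rfl, rfl⟩ <;>
        first
          | exact h r a2 a3
          | exact h r a3 a2
          | exact h p a1 a3.symm
          | exact h p a3.symm a1
          | exact h v a1.symm a2.symm
          | exact h v a2.symm a1.symm
  have endTri : ∀ a b : V, G.Adj a b → a ∈ triVerts G := by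
    intro a b hab
    obtain ⟨w, hw1, hw2⟩ := commonNbr a b hab
    rw [memTri]; exact ⟨b, w, hab, hw1, hw2⟩
  -- membership bookkeeping
  have hz12 : ∀ z ∈ V31 ∪ V32, z ∉ V1 ∪ V2 := by
    intro z hz h12
    rcases Finset.mem_union.mp hz with hz' | hz' <;>
      rcases Finset.mem_union.mp h12 with h' | h'
    · exact Finset.disjoint_left.mp d131 h' hz'
    · exact Finset.disjoint_left.mp d231 h' hz'
    · exact Finset.disjoint_left.mp d132 h' hz'
    · exact Finset.disjoint_left.mp d232 h' hz'
  have memS : ∀ v : V, v ∈ triVerts G ↔ (v ∈ V1 ∪ V2 ∨ v ∈ V31 ∪ V32) := by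
    intro v
    rw [← hcover]
    simp only [Finset.mem_union]
    tauto
  -- neighbours of V31 ∪ V32 lie in V1 ∪ V2
  have nbrV3 : ∀ z ∈ V31 ∪ V32, ∀ u : V, G.Adj z u → u ∈ V1 ∪ V2 := by
    intro z hz u hzu
    have hzS : z ∈ triVerts G := endTri z u hzu
    have huS : u ∈ triVerts G := endTri u z hzu.symm
    by_contra h
    have hz' := hz12 z hz
    simp only [Finset.mem_union, not_or] at h hz'
    exact hindep z hzS u huS hz'.1 hz'.2 h.1 h.2 hzu
  -- every vertex of V1 ∪ V2 lies in a triangle inside V1 ∪ V2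
  have hTri12 : ∀ w ∈ V1 ∪ V2, ∃ p r, p ∈ V1 ∪ V2 ∧ r ∈ V1 ∪ V2 ∧
      G.Adj w p ∧ G.Adj w r ∧ G.Adj p r := by
    intro w hw
    rcases Finset.mem_union.mp hw with hw1 | hw2
    · rw [← hTun] at hw1
      obtain ⟨t, ht, hwt⟩ := Finset.mem_biUnion.mp hw1
      simp only [id] at hwt
      obtain ⟨hc3, hsub, hadj⟩ := hT t ht
      have hcard : (t.erase w).card = 2 := by
        rw [Finset.card_erase_of_mem hwt, hc3]
      obtain ⟨p, r, hpr, hpre⟩ := Finset.card_eq_two.mp hcard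
      have hp : p ∈ t.erase w := by rw [hpre]; simp
      have hr : r ∈ t.erase w := by rw [hpre]; simp
      have hpt := Finset.mem_of_mem_erase hp
      have hrt := Finset.mem_of_mem_erase hr
      exact ⟨p, r, Finset.mem_union_left _ (hsub hpt), Finset.mem_union_left _ (hsub hrt),
        hadj w hwt p hpt (Finset.ne_of_mem_erase hp).symm,
        hadj w hwt r hrt (Finset.ne_of_mem_erase hr).symm,
        hadj p hpt r hrt hpr⟩
    · rw [← hMun] at hw2
      obtain ⟨m, hm, hwm⟩ := Finset.mem_biUnion.mp hw2
      simp only [id] at hwm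
      obtain ⟨hc2, hsub, hadj⟩ := hM m hm
      have hcard : (m.erase w).card = 1 := by
        rw [Finset.card_erase_of_mem hwm, hc2]
      obtain ⟨w', hw'e⟩ := Finset.card_eq_one.mp hcard
      have hw' : w' ∈ m.erase w := by rw [hw'e]; simp
      have hw'm := Finset.mem_of_mem_erase hw'
      obtain ⟨hcm1, hcm2⟩ := hMc m hm
      exact ⟨w', c m, Finset.mem_union_right _ (hsub hw'm), Finset.mem_union_left _ hcm1,
        hadj w hwm w' hw'm (Finset.ne_of_mem_erase hw').symm,
        hcm2 w hwm, hcm2 w' hw'm⟩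
  -- auxiliary: an edge inside V1 ∪ V2 differs from any edge with an endpoint outside
  have edgeNe : ∀ x y zz uu : V, zz ∉ V1 ∪ V2 → x ∈ V1 ∪ V2 → y ∈ V1 ∪ V2 →
      s(x,y) ≠ s(zz,uu) := by
    intro x y zz uu hzz hx hy he
    rw [Sym2.eq_iff] at he
    rcases he with ⟨rfl, rfl⟩ | ⟨rfl, rfl⟩
    · exact hzz hx
    · exact hzz hy
  -- each vertex of V31 ∪ V32 has exactly two neighbours
  have deg2 : ∀ z ∈ V31 ∪ V32, ∃ a b : V, a ≠ b ∧ a ∈ V1 ∪ V2 ∧ b ∈ V1 ∪ V2 ∧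
      G.Adj a b ∧ G.neighborFinset z = {a, b} := by
    intro z hz
    have hzS : z ∈ triVerts G := (memS z).mpr (Or.inr hz)
    obtain ⟨a, b, hza, hzb, hab⟩ := (memTri z).mp hzS
    have haM : a ∈ V1 ∪ V2 := nbrV3 z hz a hza
    have hbM : b ∈ V1 ∪ V2 := nbrV3 z hz b hzb
    have hzV12 := hz12 z hz
    refine ⟨a, b, hab.ne, haM, hbM, hab, ?_⟩
    ext u
    simp only [Finset.mem_insert, Finset.mem_singleton, SimpleGraph.mem_neighborFinset]
    constructor
    · intro hzu
      by_contra hu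
      push_neg at hu
      obtain ⟨hua, hub⟩ := hu
      have huV12 : u ∈ V1 ∪ V2 := nbrV3 z hz u hzu
      apply keyDel z u hzu
      intro v hv
      by_cases hv12 : v ∈ V1 ∪ V2
      · obtain ⟨p, r, hp, hr, a1, a2, a3⟩ := hTri12 v hv12
        exact ⟨p, r, a1, a2, a3, edgeNe v p z u hzV12 hv12 hp,
          edgeNe v r z u hzV12 hv12 hr, edgeNe p r z u hzV12 hp hr⟩
      · have hvz : v ∈ V31 ∪ V32 := by
          rcases (memS v).mp hv with h' | h'
          · exact absurd h' hv12
          · exact h'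
        by_cases hvzeq : v = z
        · subst hvzeq
          refine ⟨a, b, hza, hzb, hab, ?_, ?_, edgeNe a b v u hzV12 haM hbM⟩
          · intro he
            rw [Sym2.eq_iff] at he
            rcases he with ⟨-, rfl⟩ | ⟨rfl, rfl⟩
            · exact hua rfl
            · exact G.loopless.irrefl _ hza
          · intro he
            rw [Sym2.eq_iff] at he
            rcases he with ⟨-, rfl⟩ | ⟨rfl, rfl⟩
            · exact hub rfl
            · exact G.loopless.irrefl _ hzb
        · obtain ⟨a', b', hva', hvb', ha'b'⟩ := (memTri v).mp hv
          have ha'M : a' ∈ V1 ∪ V2 := nbrV3 v hvz a' hva'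
          have hb'M : b' ∈ V1 ∪ V2 := nbrV3 v hvz b' hvb'
          have hvV12 := hz12 v hvz
          refine ⟨a', b', hva', hvb', ha'b', ?_, ?_,
            edgeNe a' b' z u hzV12 ha'M hb'M⟩
          · intro he
            rw [Sym2.eq_iff] at he
            rcases he with ⟨rfl, -⟩ | ⟨rfl, rfl⟩
            · exact hvzeq rfl
            · exact hvV12 huV12
          · intro he
            rw [Sym2.eq_iff] at he
            rcases he with ⟨rfl, -⟩ | ⟨rfl, rfl⟩
            · exact hvzeq rfl
            · exact hvV12 huV12
    · intro hu
      rcases hu with rfl | rfl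
      · exact hza
      · exact hzb
  have degV3 : ∀ z ∈ V31 ∪ V32, (G.incidenceFinset z).card = 2 := by
    intro z hz
    obtain ⟨a, b, hab, -, -, -, hN⟩ := deg2 z hz
    rw [SimpleGraph.card_incidenceFinset_eq_degree, SimpleGraph.degree, hN,
      Finset.card_pair hab]
  set E := G.edgeFinset with hEdef
  set E1 := E.filter (fun e => ∀ v ∈ e, v ∈ V1) with hE1def
  set E2 := E.filter (fun e => ∀ v ∈ e, v ∈ V2) with hE2def
  set E12 := E.filter (fun e => ∃ x ∈ V1, ∃ y ∈ V2, e = s(x,y)) with hE12def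
  set E3 := E.filter (fun e => ∃ v ∈ e, v ∈ V31 ∪ V32) with hE3def
  -- the four classes partition the edge set
  have hcardE : E.card = E1.card + E12.card + E2.card + E3.card := by
    have end1 : ∀ e ∈ E1, ∀ v ∈ e, v ∈ V1 := by
      intro e he; exact (Finset.mem_filter.mp he).2
    have end2 : ∀ e ∈ E2, ∀ v ∈ e, v ∈ V2 := by
      intro e he; exact (Finset.mem_filter.mp he).2
    have d_1_12 : Disjoint E1 E12 := by
      rw [Finset.disjoint_left]
      intro e he he'
      obtain ⟨-, x, hx, y, hy, rfl⟩ := Finset.mem_filter.mp he'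
      have : y ∈ V1 := end1 _ he y (by simp)
      exact Finset.disjoint_left.mp d12 this hy
    have d_1_2 : Disjoint E1 E2 := by
      rw [Finset.disjoint_left]
      intro e he he'
      induction e using Sym2.ind with
      | _ x y =>
        exact Finset.disjoint_left.mp d12 (end1 _ he x (by simp)) (end2 _ he' x (by simp))
    have d_12_2 : Disjoint E12 E2 := by
      rw [Finset.disjoint_left]
      intro e he he'
      obtain ⟨-, x, hx, y, hy, rfl⟩ := Finset.mem_filter.mp he
      have : x ∈ V2 := end2 _ he' x (by simp)
      exact Finset.disjoint_left.mp d12 hx this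
    have d_a_3 : Disjoint (E1 ∪ E12 ∪ E2) E3 := by
      rw [Finset.disjoint_left]
      intro e he he'
      obtain ⟨-, v, hve, hv3⟩ := Finset.mem_filter.mp he'
      have hv12 : v ∈ V1 ∪ V2 := by
        rcases Finset.mem_union.mp he with h' | h'
        · rcases Finset.mem_union.mp h' with h'' | h''
          · exact Finset.mem_union_left _ (end1 _ h'' v hve)
          · obtain ⟨-, x, hx, y, hy, rfl⟩ := Finset.mem_filter.mp h''
            rcases Sym2.mem_iff.mp hve with rfl | rfl
            · exact Finset.mem_union_left _ hx
            · exact Finset.mem_union_right _ hy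
        · exact Finset.mem_union_right _ (end2 _ h' v hve)
      exact hz12 v hv3 hv12
    have hsplit : E = E1 ∪ E12 ∪ E2 ∪ E3 := by
      apply Finset.Subset.antisymm
      · intro e he
        induction e using Sym2.ind with
        | _ x y =>
          have hxy : G.Adj x y := by
            rw [SimpleGraph.mem_edgeFinset] at he; exact he
          have hxS := (memS x).mp (endTri x y hxy)
          have hyS := (memS y).mp (endTri y x hxy.symm)
          simp only [Finset.mem_union]
          by_cases hx3 : x ∈ V31 ∪ V32
          · exact Or.inr (Finset.mem_filter.mpr ⟨he, x, by simp, hx3⟩)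
          by_cases hy3 : y ∈ V31 ∪ V32
          · exact Or.inr (Finset.mem_filter.mpr ⟨he, y, by simp, hy3⟩)
          have hx12 : x ∈ V1 ∪ V2 := by tauto
          have hy12 : y ∈ V1 ∪ V2 := by tauto
          rcases Finset.mem_union.mp hx12 with hx' | hx' <;>
            rcases Finset.mem_union.mp hy12 with hy' | hy'
          · refine Or.inl (Or.inl (Or.inl (Finset.mem_filter.mpr ⟨he, ?_⟩)))
            intro v hv
            rcases Sym2.mem_iff.mp hv with rfl | rfl <;> assumption
          · exact Or.inl (Or.inl (Or.inr (Finset.mem_filter.mpr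
              ⟨he, x, hx', y, hy', rfl⟩)))
          · exact Or.inl (Or.inl (Or.inr (Finset.mem_filter.mpr
              ⟨he, y, hy', x, hx', Sym2.eq_swap⟩)))
          · refine Or.inl (Or.inr (Finset.mem_filter.mpr ⟨he, ?_⟩))
            intro v hv
            rcases Sym2.mem_iff.mp hv with rfl | rfl <;> assumption
      · intro e he
        rcases Finset.mem_union.mp he with h' | h'
        · rcases Finset.mem_union.mp h' with h'' | h''
          · rcases Finset.mem_union.mp h'' with h3 | h3
            · exact Finset.mem_of_mem_filter _ h3
            · exact Finset.mem_of_mem_filter _ h3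
          · exact Finset.mem_of_mem_filter _ h''
        · exact Finset.mem_of_mem_filter _ h'
    rw [hsplit, Finset.card_union_of_disjoint d_a_3,
      Finset.card_union_of_disjoint (by
        rw [Finset.disjoint_union_left]; exact ⟨d_1_2, d_12_2⟩),
      Finset.card_union_of_disjoint d_1_12]
  -- edges meeting V31 ∪ V32
  have hE3card : E3.card = 2 * (l31 + l32) := by
    have hbi : E3 = (V31 ∪ V32).biUnion (fun z => G.incidenceFinset z) := by
      ext e
      simp only [hE3def, hEdef, Finset.mem_filter, Finset.mem_biUnion,
        SimpleGraph.mem_incidenceFinset, SimpleGraph.incidenceSet, Set.mem_setOf_eq,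
        SimpleGraph.mem_edgeFinset]
      constructor
      · rintro ⟨he, v, hve, hv3⟩
        exact ⟨v, hv3, he, hve⟩
      · rintro ⟨z, hz3, hes, hze⟩
        exact ⟨hes, z, hze, hz3⟩
    have hdisj : ∀ z ∈ V31 ∪ V32, ∀ z' ∈ V31 ∪ V32, z ≠ z' →
        Disjoint (G.incidenceFinset z) (G.incidenceFinset z') := by
      intro z hz z' hz' hne
      rw [Finset.disjoint_left]
      intro e he he'
      rw [SimpleGraph.mem_incidenceFinset] at he he'
      have hadj : G.Adj z z' := by
        induction e using Sym2.ind with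
        | _ x y =>
          have hxy : G.Adj x y := he.1
          rcases Sym2.mem_iff.mp he.2 with rfl | rfl <;>
            rcases Sym2.mem_iff.mp he'.2 with rfl | rfl
          · exact absurd rfl hne
          · exact hxy
          · exact hxy.symm
          · exact absurd rfl hne
      exact hz12 z' hz' (nbrV3 z hz z' hadj)
    rw [hbi, Finset.card_biUnion hdisj]
    rw [Finset.sum_congr rfl degV3, Finset.sum_const, smul_eq_mul,
      Finset.card_union_of_disjoint d3132, h31, h32, mul_comm]
  -- the triangle-factor edges
  set ET := T.biUnion (fun t => E.filter (fun e => ∀ v ∈ e, v ∈ t)) with hETdef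
  have hTbidisj : ∀ t ∈ T, ∀ t' ∈ T, t ≠ t' →
      Disjoint (E.filter (fun e => ∀ v ∈ e, v ∈ t)) (E.filter (fun e => ∀ v ∈ e, v ∈ t')) := by
    intro t ht t' ht' hne
    rw [Finset.disjoint_left]
    intro e he he'
    induction e using Sym2.ind with
    | _ x y =>
      have hx : x ∈ t := (Finset.mem_filter.mp he).2 x (by simp)
      have hx' : x ∈ t' := (Finset.mem_filter.mp he').2 x (by simp)
      have : Disjoint t t' := hTdisj ht ht' hne
      exact Finset.disjoint_left.mp this hx hx'
  have hl1Tcard : l1 = 3 * T.card := by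
    rw [← h1, ← hTun, Finset.card_biUnion (fun t ht t' ht' hne => hTdisj ht ht' hne)]
    simp only [id_eq]
    rw [Finset.sum_congr rfl (fun t ht => (hT t ht).1), Finset.sum_const, smul_eq_mul,
      mul_comm]
  have hfil3 : ∀ t ∈ T, (E.filter (fun e => ∀ v ∈ e, v ∈ t)).card = 3 := by
    intro t ht
    obtain ⟨hc3, hsub, hadj⟩ := hT t ht
    obtain ⟨x, y, z, hxy, hxz, hyz, rfl⟩ := Finset.card_eq_three.mp hc3
    have hxm : x ∈ ({x, y, z} : Finset V) := by simp
    have hym : y ∈ ({x, y, z} : Finset V) := by simp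
    have hzm : z ∈ ({x, y, z} : Finset V) := by simp
    have hset : E.filter (fun e => ∀ v ∈ e, v ∈ ({x, y, z} : Finset V)) =
        {s(x,y), s(x,z), s(y,z)} := by
      ext e
      induction e using Sym2.ind with
      | _ a b =>
        simp only [Finset.mem_filter, hEdef, SimpleGraph.mem_edgeFinset,
          SimpleGraph.mem_edgeSet, Finset.mem_insert, Finset.mem_singleton]
        constructor
        · rintro ⟨hab, hmemf⟩
          have ha := hmemf a (by simp)
          have hb := hmemf b (by simp)
          have hne := hab.ne
          rcases ha with rfl | rfl | rfl <;> rcases hb with rfl | rfl | rfl <;>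
            first
              | exact absurd rfl hne
              | exact Or.inl rfl
              | exact Or.inl Sym2.eq_swap
              | exact Or.inr (Or.inl rfl)
              | exact Or.inr (Or.inl Sym2.eq_swap)
              | exact Or.inr (Or.inr rfl)
              | exact Or.inr (Or.inr Sym2.eq_swap)
        · rintro (h | h | h) <;>
            rcases Sym2.eq_iff.mp h with ⟨rfl, rfl⟩ | ⟨rfl, rfl⟩ <;>
            refine ⟨hadj _ (by simp) _ (by simp) ?_, ?_⟩ <;>
            first
              | exact hxy | exact hxy.symm | exact hxz | exact hxz.symm
              | exact hyz | exact hyz.symm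
              | (intro v hv; rcases Sym2.mem_iff.mp hv with rfl | rfl <;> simp)
    rw [hset]
    rw [Finset.card_insert_of_notMem (by simp [Sym2.eq_iff, hxy, hxz, hyz]),
      Finset.card_insert_of_notMem (by simp [Sym2.eq_iff, hxy, hxz, hyz]),
      Finset.card_singleton]
  have hETcard : ET.card = 3 * T.card := by
    rw [hETdef, Finset.card_biUnion hTbidisj, Finset.sum_congr rfl hfil3,
      Finset.sum_const, smul_eq_mul, mul_comm]
  -- matching-related counts
  have hl2Mcard : l2 = 2 * M.card := by
    rw [← h2, ← hMun, Finset.card_biUnion (fun m hm m' hm' hne => hMdisj hm hm' hne)]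
    simp only [id_eq]
    rw [Finset.sum_congr rfl (fun m hm => (hM m hm).1), Finset.sum_const, smul_eq_mul,
      mul_comm]
  have hMmem : ∀ y ∈ V2, ∃ m ∈ M, y ∈ m := by
    intro y hy
    rw [← hMun] at hy
    obtain ⟨m, hm, hym⟩ := Finset.mem_biUnion.mp hy
    exact ⟨m, hm, hym⟩
  have hMuniq : ∀ y : V, ∀ m ∈ M, ∀ m' ∈ M, y ∈ m → y ∈ m' → m = m' := by
    intro y m hm m' hm' hym hym'
    by_contra hne
    exact Finset.disjoint_left.mp (hMdisj hm hm' hne) hym hym'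
  have hE2card : E2.card = M.card := by
    have hbi : E2 = M.biUnion (fun m => E.filter (fun e => ∀ v ∈ e, v ∈ m)) := by
      ext e
      induction e using Sym2.ind with
      | _ x y =>
        simp only [hE2def, Finset.mem_filter, Finset.mem_biUnion]
        constructor
        · rintro ⟨he, hmemf⟩
          have hx : x ∈ V2 := hmemf x (by simp)
          have hy : y ∈ V2 := hmemf y (by simp)
          have hadj : G.Adj x y := by
            rw [hEdef, SimpleGraph.mem_edgeFinset] at he; exact he
          obtain ⟨m, hm, hxm, hym⟩ := hMonly x hx y hy hadj
          refine ⟨m, hm, he, ?_⟩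
          intro v hv
          rcases Sym2.mem_iff.mp hv with rfl | rfl <;> assumption
        · rintro ⟨m, hm, he, hmemf⟩
          exact ⟨he, fun v hv => (hM m hm).2.1 (hmemf v hv)⟩
    have hMbidisj : ∀ m ∈ M, ∀ m' ∈ M, m ≠ m' →
        Disjoint (E.filter (fun e => ∀ v ∈ e, v ∈ m)) (E.filter (fun e => ∀ v ∈ e, v ∈ m')) := by
      intro m hm m' hm' hne
      rw [Finset.disjoint_left]
      intro e he he'
      induction e using Sym2.ind with
      | _ x y =>
        have hd : Disjoint m m' := hMdisj hm hm' hne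
        exact Finset.disjoint_left.mp hd
          ((Finset.mem_filter.mp he).2 x (by simp))
          ((Finset.mem_filter.mp he').2 x (by simp))
    have hfil1 : ∀ m ∈ M, (E.filter (fun e => ∀ v ∈ e, v ∈ m)).card = 1 := by
      intro m hm
      obtain ⟨hc2, hsub, hadj⟩ := hM m hm
      obtain ⟨u, v, huv, rfl⟩ := Finset.card_eq_two.mp hc2
      have hum : u ∈ ({u, v} : Finset V) := by simp
      have hvm : v ∈ ({u, v} : Finset V) := by simp
      have hset : E.filter (fun e => ∀ w ∈ e, w ∈ ({u, v} : Finset V)) = {s(u,v)} := by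
        ext e
        induction e using Sym2.ind with
        | _ a b =>
          simp only [Finset.mem_filter, hEdef, SimpleGraph.mem_edgeFinset,
            SimpleGraph.mem_edgeSet, Finset.mem_singleton]
          constructor
          · rintro ⟨hab, hmemf⟩
            have ha := hmemf a (by simp)
            have hb := hmemf b (by simp)
            simp only [Finset.mem_insert, Finset.mem_singleton] at ha hb
            have hne := hab.ne
            rcases ha with rfl | rfl <;> rcases hb with rfl | rfl <;>
              first
                | exact absurd rfl hne
                | rfl
                | exact Sym2.eq_swap
          · rintro h
            rcases Sym2.eq_iff.mp h with ⟨rfl, rfl⟩ | ⟨rfl, rfl⟩ <;>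
              refine ⟨hadj _ (by simp) _ (by simp) ?_, ?_⟩ <;>
              first
                | exact huv | exact huv.symm
                | (intro w hw; rcases Sym2.mem_iff.mp hw with rfl | rfl <;> simp)
      rw [hset, Finset.card_singleton]
    rw [hbi, Finset.card_biUnion hMbidisj, Finset.sum_congr rfl hfil1,
      Finset.sum_const, smul_eq_mul, mul_one]
  -- edges joining matched pairs to their common neighbour
  set EC := M.biUnion (fun m => m.image (fun u => s(u, c m))) with hECdef
  have hECsub : ∀ e ∈ EC, ∃ m ∈ M, ∃ u ∈ m, e = s(u, c m) := by
    intro e he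
    obtain ⟨m, hm, hme⟩ := Finset.mem_biUnion.mp he
    obtain ⟨u, hum, rfl⟩ := Finset.mem_image.mp hme
    exact ⟨m, hm, u, hum, rfl⟩
  have hECcard : EC.card = 2 * M.card := by
    have hdisj : ∀ m ∈ M, ∀ m' ∈ M, m ≠ m' →
        Disjoint (m.image (fun u => s(u, c m))) (m'.image (fun u => s(u, c m'))) := by
      intro m hm m' hm' hne
      rw [Finset.disjoint_left]
      intro e he he'
      obtain ⟨u, hum, rfl⟩ := Finset.mem_image.mp he
      obtain ⟨u', hum', heq⟩ := Finset.mem_image.mp he'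
      rw [Sym2.eq_iff] at heq
      rcases heq with ⟨rfl, -⟩ | ⟨h1, h2⟩
      · have hd : Disjoint m m' := hMdisj hm hm' hne
        exact Finset.disjoint_left.mp hd hum hum'
      · have : u' ∈ V2 := (hM m' hm').2.1 hum'
        rw [h1] at this
        exact Finset.disjoint_left.mp d12 (hMc m hm).1 this
    rw [hECdef, Finset.card_biUnion hdisj]
    have himg : ∀ m ∈ M, (m.image (fun u => s(u, c m))).card = 2 := by
      intro m hm
      rw [Finset.card_image_of_injective _ ?inj, (hM m hm).1]
      case inj =>
        intro a b hab
        rw [Sym2.eq_iff] at hab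
        rcases hab with ⟨h, -⟩ | ⟨h1, h2⟩
        · exact h
        · rw [h1, ← h2]
    rw [Finset.sum_congr rfl himg, Finset.sum_const, smul_eq_mul, mul_comm]
  -- W-edges
  have WAdj : ∀ x y, W x y → G.Adj x y := by
    intro x y hxy
    rw [hW] at hxy
    rcases hxy with ⟨-, -, ha, -⟩ | ⟨-, -, ha, -⟩ <;> exact ha
  set WE := E.filter (fun e => ∃ x y, W x y ∧ e = s(x,y)) with hWEdef
  set WE1 := WE.filter (fun e => ∀ v ∈ e, v ∈ V1) with hWE1def
  set WE2 := WE.filter (fun e => ∃ x ∈ V1, ∃ y ∈ V2, e = s(x,y)) with hWE2def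
  have hWEsplit : WE.card = WE1.card + WE2.card := by
    have hdisj : Disjoint WE1 WE2 := by
      rw [Finset.disjoint_left]
      intro e he he'
      obtain ⟨-, x, hx, y, hy, rfl⟩ := Finset.mem_filter.mp he'
      have : y ∈ V1 := (Finset.mem_filter.mp he).2 y (by simp)
      exact Finset.disjoint_left.mp d12 this hy
    have hcov : WE = WE1 ∪ WE2 := by
      apply Finset.Subset.antisymm
      · intro e he
        obtain ⟨heE, x, y, hWxy, rfl⟩ := Finset.mem_filter.mp he
        rw [hW] at hWxy
        rcases hWxy with ⟨hx, hy, -, -⟩ | ⟨hx, hy, -, -⟩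
        · refine Finset.mem_union_left _ (Finset.mem_filter.mpr ⟨he, ?_⟩)
          intro v hv
          rcases Sym2.mem_iff.mp hv with rfl | rfl <;> assumption
        · exact Finset.mem_union_right _ (Finset.mem_filter.mpr ⟨he, x, hx, y, hy, rfl⟩)
      · intro e he
        rcases Finset.mem_union.mp he with h' | h' <;> exact Finset.mem_of_mem_filter _ h'
    rw [hcov, Finset.card_union_of_disjoint hdisj]
  -- edges inside V1 split into factor edges and W-edges
  have hE1card : E1.card = 3 * T.card + WE1.card := by
    have hdisj : Disjoint ET WE1 := by
      rw [Finset.disjoint_left]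
      intro e heT heW
      obtain ⟨t, ht, hft⟩ := Finset.mem_biUnion.mp heT
      obtain ⟨heWE, -⟩ := Finset.mem_filter.mp heW
      obtain ⟨-, x, y, hWxy, rfl⟩ := Finset.mem_filter.mp heWE
      have hxt : x ∈ t := (Finset.mem_filter.mp hft).2 x (by simp)
      have hyt : y ∈ t := (Finset.mem_filter.mp hft).2 y (by simp)
      rw [hW] at hWxy
      rcases hWxy with ⟨-, -, -, hno⟩ | ⟨-, hy2, -, -⟩
      · exact hno ⟨t, ht, hxt, hyt⟩
      · exact Finset.disjoint_left.mp d12 ((hT t ht).2.1 hyt) hy2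
    have hcov : E1 = ET ∪ WE1 := by
      apply Finset.Subset.antisymm
      · intro e he
        induction e using Sym2.ind with
        | _ x y =>
          obtain ⟨heE, hmem⟩ := Finset.mem_filter.mp he
          have hx : x ∈ V1 := hmem x (by simp)
          have hy : y ∈ V1 := hmem y (by simp)
          have hadj : G.Adj x y := by
            rw [hEdef, SimpleGraph.mem_edgeFinset] at heE; exact heE
          by_cases ht : ∃ t ∈ T, x ∈ t ∧ y ∈ t
          · obtain ⟨t, htT, hxt, hyt⟩ := ht
            refine Finset.mem_union_left _ (Finset.mem_biUnion.mpr ⟨t, htT,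
              Finset.mem_filter.mpr ⟨heE, ?_⟩⟩)
            intro v hv
            rcases Sym2.mem_iff.mp hv with rfl | rfl <;> assumption
          · refine Finset.mem_union_right _ (Finset.mem_filter.mpr
              ⟨Finset.mem_filter.mpr ⟨heE, x, y, ?_, rfl⟩, hmem⟩)
            rw [hW]
            exact Or.inl ⟨hx, hy, hadj, ht⟩
      · intro e he
        rcases Finset.mem_union.mp he with h' | h'
        · obtain ⟨t, ht, hft⟩ := Finset.mem_biUnion.mp h'
          obtain ⟨heE, hmem⟩ := Finset.mem_filter.mp hft
          exact Finset.mem_filter.mpr ⟨heE, fun v hv => (hT t ht).2.1 (hmem v hv)⟩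
        · obtain ⟨heWE, hmem⟩ := Finset.mem_filter.mp h'
          exact Finset.mem_filter.mpr ⟨Finset.mem_of_mem_filter _ heWE, hmem⟩
    rw [hcov, Finset.card_union_of_disjoint hdisj, hETcard]
  -- edges between V1 and V2 split into matched edges and W-edges
  have hE12card : E12.card = 2 * M.card + WE2.card := by
    have hdisj : Disjoint EC WE2 := by
      rw [Finset.disjoint_left]
      intro e heC heW
      obtain ⟨m, hm, u, hum, rfl⟩ := hECsub _ heC
      obtain ⟨heWE, -⟩ := Finset.mem_filter.mp heW
      obtain ⟨-, x, y, hWxy, heq⟩ := Finset.mem_filter.mp heWE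
      rw [hW] at hWxy
      have huV2 : u ∈ V2 := (hM m hm).2.1 hum
      rcases hWxy with ⟨hx, hy, -, -⟩ | ⟨hx, hy, -, hno⟩
      · rw [Sym2.eq_iff] at heq
        rcases heq with ⟨h5, -⟩ | ⟨h5, -⟩
        · rw [h5] at huV2; exact Finset.disjoint_left.mp d12 hx huV2
        · rw [h5] at huV2; exact Finset.disjoint_left.mp d12 hy huV2
      · rw [Sym2.eq_iff] at heq
        rcases heq with ⟨h5, -⟩ | ⟨h5, h6⟩
        · rw [h5] at huV2; exact Finset.disjoint_left.mp d12 hx huV2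
        · exact hno ⟨m, hm, by rw [← h5]; exact hum, h6⟩
    have hcov : E12 = EC ∪ WE2 := by
      apply Finset.Subset.antisymm
      · intro e he
        obtain ⟨heE, x, hx, y, hy, rfl⟩ := Finset.mem_filter.mp he
        have hadj : G.Adj x y := by
          rw [hEdef, SimpleGraph.mem_edgeFinset] at heE; exact heE
        obtain ⟨m, hm, hym⟩ := hMmem y hy
        by_cases hcx : c m = x
        · refine Finset.mem_union_left _ (Finset.mem_biUnion.mpr ⟨m, hm,
            Finset.mem_image.mpr ⟨y, hym, ?_⟩⟩)
          rw [hcx, Sym2.eq_swap]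
        · refine Finset.mem_union_right _ (Finset.mem_filter.mpr
            ⟨Finset.mem_filter.mpr ⟨heE, x, y, ?_, rfl⟩, x, hx, y, hy, rfl⟩)
          rw [hW]
          refine Or.inr ⟨hx, hy, hadj, ?_⟩
          rintro ⟨m', hm', hym', hcm'⟩
          exact hcx (by rw [hMuniq y m hm m' hm' hym hym']; exact hcm')
      · intro e he
        rcases Finset.mem_union.mp he with h' | h'
        · obtain ⟨m, hm, u, hum, rfl⟩ := hECsub _ h'
          refine Finset.mem_filter.mpr ⟨?_, c m, (hMc m hm).1, u, (hM m hm).2.1 hum,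
            Sym2.eq_swap⟩
          rw [hEdef, SimpleGraph.mem_edgeFinset]
          exact (hMc m hm).2 u hum
        · obtain ⟨heWE, hx⟩ := Finset.mem_filter.mp h'
          exact Finset.mem_filter.mpr ⟨Finset.mem_of_mem_filter _ heWE, hx⟩
    rw [hcov, Finset.card_union_of_disjoint hdisj, hECcard]
  -- the W-edges are in bijection with V31
  have hWEcard : WE.card = l31 := by
    rw [← h31]
    symm
    choose fx fy hfW hfx hfy using hW31
    refine Finset.card_bij (fun z hz => s(fx z hz, fy z hz)) ?_ ?_ ?_
    · intro z hz
      refine Finset.mem_filter.mpr ⟨?_, fx z hz, fy z hz, hfW z hz, rfl⟩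
      rw [hEdef, SimpleGraph.mem_edgeFinset]
      exact WAdj _ _ (hfW z hz)
    · intro z hz z' hz' heq
      obtain ⟨w, -, hwuniq⟩ := hWuniq _ _ (hfW z hz)
      have e1 : z = w := hwuniq z ⟨hz, hfx z hz, hfy z hz⟩
      have e2 : z' = w := by
        apply hwuniq z'
        rcases Sym2.eq_iff.mp heq with ⟨hx', hy'⟩ | ⟨hx', hy'⟩
        · exact ⟨hz', by rw [hx']; exact hfx z' hz', by rw [hy']; exact hfy z' hz'⟩
        · exact ⟨hz', by rw [hx']; exact hfy z' hz', by rw [hy']; exact hfx z' hz'⟩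
      rw [e1, e2]
    · intro e he
      obtain ⟨heE, x, y, hWxy, rfl⟩ := Finset.mem_filter.mp he
      obtain ⟨w, ⟨hwV31, hxw, hyw⟩, hwuniq⟩ := hWuniq x y hWxy
      refine ⟨w, hwV31, ?_⟩
      show s(fx w hwV31, fy w hwV31) = s(x, y)
      obtain ⟨a, b, hab, haM, hbM, hadjab, hN⟩ := deg2 w (Finset.mem_union_left _ hwV31)
      have hmem : ∀ u : V, G.Adj u w → (u = a ∨ u = b) := by
        intro u hu
        have hu' : u ∈ G.neighborFinset w := by
          rw [SimpleGraph.mem_neighborFinset]; exact hu.symm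
        rw [hN] at hu'
        simpa using hu'
      have hxy : x ≠ y := (WAdj x y hWxy).ne
      have hxy' : fx w hwV31 ≠ fy w hwV31 := (WAdj _ _ (hfW w hwV31)).ne
      rcases hmem x hxw with rfl | rfl <;> rcases hmem y hyw with rfl | rfl <;>
        rcases hmem _ (hfx w hwV31) with h3 | h3 <;>
        rcases hmem _ (hfy w hwV31) with h4 | h4 <;>
        first
          | exact absurd rfl hxy
          | exact absurd (h3.trans h4.symm) hxy'
          | (rw [h3, h4]; try exact Sym2.eq_swap)
  -- final assembly
  have hfinal : E.card = l1 + 3 * M.card + l31 + 2 * (l31 + l32) := by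
    rw [hcardE, hE1card, hE12card, hE2card, hE3card]
    omega
  have hncard : G.edgeSet.ncard = E.card := by
    rw [hEdef, ← SimpleGraph.coe_edgeFinset, Set.ncard_coe_finset]
  rw [hncard, hfinal, hl2Mcard]
  push_cast
  ring
end
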